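/- Logit (softmax) choice probabilities under Gumbel shocks: let n ≥ 1, V_1, …, V_n ∈ ℝ, and let ε_1, …, ε_n be independent identically distributed real random variables with the Gumbel(μ̲, β) distribution, β > 0. Then for each i, the probability that V_i + ε_i ≥ V_j + ε_j for all j equals exp(V_i/β) / Σ_{j=1}^{n} exp(V_j/β). -/

import Mathlib

open MeasureTheory ProbabilityTheory

noncomputable section

/-- Density of the Gumbel(μ₀, β) distribution:
`f(x) = (1/β) exp(−z − exp(−z))` where `z = (x − μ₀)/β`. -/
def gumbelPdf (μ₀ β x : ℝ) : ℝ :=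
  (1 / β) * Real.exp (-((x - μ₀) / β) - Real.exp (-((x - μ₀) / β)))

/-- The Gumbel(μ₀, β) probability distribution on ℝ, given by the density `gumbelPdf`
with respect to Lebesgue measure (equivalently, with c.d.f.
`F(x) = exp(−exp(−(x − μ₀)/β))`). -/
def gumbelMeasure (μ₀ β : ℝ) : Measure ℝ :=
  volume.withDensity (fun x => ENNReal.ofReal (gumbelPdf μ₀ β x))

section AuxGumbel

open Set Filter
open scoped Topology

set_option maxHeartbeats 1000000

variable {μ₀ β : ℝ}


lemma gumbelPdf_nonneg (hβ : 0 < β) (x : ℝ) : 0 ≤ gumbelPdf μ₀ β x := by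
  unfold gumbelPdf; positivity

lemma continuous_gumbelPdf : Continuous (gumbelPdf μ₀ β) := by
  unfold gumbelPdf; fun_prop

lemma hasDerivAt_gumbelCdf (hβ : 0 < β) (x : ℝ) :
    HasDerivAt (fun t => Real.exp (-Real.exp (-((t - μ₀) / β)))) (gumbelPdf μ₀ β x) x := by
  have h1 : HasDerivAt (fun t : ℝ => -((t - μ₀) / β)) (-(1 / β)) x := by
    exact (((hasDerivAt_id x).sub_const μ₀).div_const β).neg
  have h4 : HasDerivAt (fun t => Real.exp (-Real.exp (-((t - μ₀) / β))))
      (Real.exp (-Real.exp (-((x - μ₀) / β))) * -(Real.exp (-((x - μ₀) / β)) * -(1 / β))) x := (h1.exp.neg).exp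
  convert h4 using 1
  unfold gumbelPdf
  rw [sub_eq_add_neg, Real.exp_add]
  ring

lemma gumbelPdf_le (hβ : 0 < β) (x : ℝ) :
    gumbelPdf μ₀ β x ≤ (4 / β) * Real.exp ((x - μ₀) / β) := by
  set z := (x - μ₀) / β with hz
  set u := Real.exp (-z) with hu
  have hu0 : 0 < u := Real.exp_pos _
  have h1 : u / 2 ≤ Real.exp (u / 2) := by
    have := Real.add_one_le_exp (u / 2); linarith
  have h2 : u ^ 2 ≤ 4 * Real.exp u := by
    have he : Real.exp (u / 2) * Real.exp (u / 2) = Real.exp u := by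
      rw [← Real.exp_add]; ring_nf
    nlinarith [Real.exp_pos (u / 2)]
  have h3 : Real.exp (-z - u) = u ^ 2 * Real.exp (-u) * Real.exp z := by
    have : u ^ 2 = Real.exp (-z) * Real.exp (-z) := by rw [hu]; ring
    rw [this, ← Real.exp_add, ← Real.exp_add, ← Real.exp_add]
    ring_nf
  have h4 : u ^ 2 * Real.exp (-u) ≤ 4 := by
    have hE : Real.exp u * Real.exp (-u) = 1 := by
      rw [← Real.exp_add]; simp
    nlinarith [Real.exp_pos (-u)]
  unfold gumbelPdf
  rw [← hz, h3]
  have hb : 0 < 1 / β := by positivity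
  have := mul_le_mul_of_nonneg_right h4 (Real.exp_pos z).le
  calc (1 / β) * (u ^ 2 * Real.exp (-u) * Real.exp z)
      ≤ (1 / β) * (4 * Real.exp z) := by
        apply mul_le_mul_of_nonneg_left _ hb.le
        exact this
    _ = (4 / β) * Real.exp z := by ring

lemma integrableOn_exp_affine_Iic (hβ : 0 < β) (t : ℝ) :
    IntegrableOn (fun x => Real.exp ((x - μ₀) / β)) (Iic t) := by
  have h1 : IntegrableOn (fun x => Real.exp (-(1/β) * x)) (Ioi (-t)) :=
    exp_neg_integrableOn_Ioi _ (by positivity)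
  have h2 : IntegrableOn (fun x => Real.exp ((1/β) * x)) (Iio t) := by
    have := (MeasurePreserving.integrableOn_comp_preimage (e := (Neg.neg : ℝ → ℝ))
      (s := Ioi (-t)) (f := fun x => Real.exp (-(1/β) * x))
      (Measure.measurePreserving_neg (volume : Measure ℝ))
      (Homeomorph.neg ℝ).measurableEmbedding).2 h1
    have hset : (Neg.neg : ℝ → ℝ) ⁻¹' Ioi (-t) = Iio t := by
      ext y; simp
    rw [hset] at this
    refine IntegrableOn.congr_fun this (fun y _ => ?_) measurableSet_Iio
    simp
  have h3 : IntegrableOn (fun x => Real.exp ((1/β) * x)) (Iic t) := by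
    rw [← Iio_union_right]
    exact h2.union ((integrableOn_singleton_iff enorm_ne_top).2 (Or.inr (by simp)))
  have h4 := h3.const_mul (Real.exp (-μ₀ / β))
  refine IntegrableOn.congr_fun h4 (fun y _ => ?_) measurableSet_Iic
  rw [← Real.exp_add]
  congr 1
  field_simp
  ring

lemma gumbelPdf_integrableOn_Iic (hβ : 0 < β) (t : ℝ) :
    IntegrableOn (gumbelPdf μ₀ β) (Iic t) := by
  refine Integrable.mono' (g := fun x => (4 / β) * Real.exp ((x - μ₀) / β))
    (((integrableOn_exp_affine_Iic (μ₀ := μ₀) hβ t)).const_mul (4 / β))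
    continuous_gumbelPdf.aestronglyMeasurable.restrict
    (Filter.Eventually.of_forall (fun x => ?_))
  rw [Real.norm_eq_abs, abs_of_nonneg (gumbelPdf_nonneg hβ x)]
  exact gumbelPdf_le hβ x

lemma tendsto_gumbelCdf_atBot (hβ : 0 < β) :
    Tendsto (fun t => Real.exp (-Real.exp (-((t - μ₀) / β)))) atBot (𝓝 0) := by
  apply Real.tendsto_exp_atBot.comp
  apply Filter.tendsto_neg_atTop_atBot.comp
  apply Real.tendsto_exp_atTop.comp
  apply Filter.tendsto_neg_atBot_atTop.comp
  exact (tendsto_atBot_add_const_right _ (-μ₀) tendsto_id).atBot_div_const hβ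

lemma tendsto_gumbelCdf_atTop (hβ : 0 < β) :
    Tendsto (fun t => Real.exp (-Real.exp (-((t - μ₀) / β)))) atTop (𝓝 1) := by
  have h0 : Tendsto (fun t : ℝ => -((t - μ₀) / β)) atTop atBot := by
    apply Filter.tendsto_neg_atTop_atBot.comp
    exact (tendsto_atTop_add_const_right _ (-μ₀) tendsto_id).atTop_div_const hβ
  have h1 : Tendsto (fun t : ℝ => -Real.exp (-((t - μ₀) / β))) atTop (𝓝 0) := by
    simpa using (Real.tendsto_exp_atBot.comp h0).neg
  simpa [Function.comp_def] using (Real.continuous_exp.tendsto 0).comp h1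

lemma gumbel_cdf (hβ : 0 < β) (t : ℝ) :
    gumbelMeasure μ₀ β (Iic t) = ENNReal.ofReal (Real.exp (-Real.exp (-((t - μ₀) / β)))) := by
  rw [gumbelMeasure, withDensity_apply _ measurableSet_Iic,
    ← ofReal_integral_eq_lintegral_ofReal (gumbelPdf_integrableOn_Iic hβ t)
      (Filter.Eventually.of_forall (fun x => gumbelPdf_nonneg hβ x))]
  congr 1
  rw [integral_Iic_of_hasDerivAt_of_tendsto' (fun x _ => hasDerivAt_gumbelCdf hβ x)
    (gumbelPdf_integrableOn_Iic hβ t) (tendsto_gumbelCdf_atBot hβ)]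
  simp

lemma gumbel_total (hβ : 0 < β) : gumbelMeasure μ₀ β Set.univ = 1 := by
  have h := tendsto_measure_Iic_atTop (gumbelMeasure μ₀ β)
  have h2 : Tendsto (fun t => gumbelMeasure μ₀ β (Iic t)) atTop (𝓝 1) := by
    simp_rw [gumbel_cdf hβ]
    rw [show (1 : ENNReal) = ENNReal.ofReal 1 by simp]
    exact (ENNReal.continuous_ofReal.tendsto 1).comp (tendsto_gumbelCdf_atTop hβ)
  exact tendsto_nhds_unique h h2

lemma gumbel_lintegral_one (hβ : 0 < β) :
    ∫⁻ x, ENNReal.ofReal (gumbelPdf μ₀ β x) = 1 := by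
  have := gumbel_total (μ₀ := μ₀) hβ
  rw [gumbelMeasure, withDensity_apply _ MeasurableSet.univ, Measure.restrict_univ] at this
  exact this

lemma gumbelPdf_key (hβ : 0 < β) {S : ℝ} (hS : 0 < S) (x : ℝ) :
    gumbelPdf μ₀ β x * Real.exp (-((S - 1) * Real.exp (-((x - μ₀) / β))))
      = (1 / S) * gumbelPdf (μ₀ + β * Real.log S) β x := by
  unfold gumbelPdf
  have h1 : (x - (μ₀ + β * Real.log S)) / β = (x - μ₀) / β - Real.log S := by
    field_simp
    ring
  rw [h1]
  set z := (x - μ₀) / β with hz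
  have hE : Real.exp (-(z - Real.log S)) = S * Real.exp (-z) := by
    rw [neg_sub, Real.exp_sub, Real.exp_log hS, Real.exp_neg]
    ring
  rw [hE]
  have lhs : Real.exp (-z - Real.exp (-z)) * Real.exp (-((S - 1) * Real.exp (-z)))
      = Real.exp (-z) * Real.exp (-(S * Real.exp (-z))) := by
    rw [← Real.exp_add, ← Real.exp_add]
    congr 1; ring
  have rhs : Real.exp (-(z - Real.log S) - S * Real.exp (-z))
      = S * (Real.exp (-z) * Real.exp (-(S * Real.exp (-z)))) := by
    rw [sub_eq_add_neg, Real.exp_add, hE]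
    ring
  rw [mul_assoc, lhs, rhs]
  field_simp

end AuxGumbel

set_option maxHeartbeats 1000000 in
/-- **Logit (softmax) choice probabilities under Gumbel shocks.** Let `V_1, …, V_n ∈ ℝ` and let
`ε_1, …, ε_n` be i.i.d. Gumbel(μ₀, β) random variables, `β > 0`. Then for each `i`, the
probability that `V_i + ε_i ≥ V_j + ε_j` for all `j` equals
`exp(V_i/β) / Σ_j exp(V_j/β)`. -/
theorem gumbel_logit_choice
    {Ω : Type*} [MeasurableSpace Ω] (P : Measure Ω) [IsProbabilityMeasure P]
    (n : ℕ) (hn : 1 ≤ n) (V : Fin n → ℝ) (μ₀ β : ℝ) (hβ : 0 < β)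
    (ε : Fin n → Ω → ℝ)
    (hmeas : ∀ i, Measurable (ε i))
    (hindep : iIndepFun ε P)
    (hdist : ∀ i, Measure.map (ε i) P = gumbelMeasure μ₀ β)
    (i : Fin n) :
    P {ω | ∀ j : Fin n, V j + ε j ω ≤ V i + ε i ω}
      = ENNReal.ofReal (Real.exp (V i / β) / ∑ j : Fin n, Real.exp (V j / β)) := by
  classical
  rcases Finset.eq_empty_or_nonempty (Finset.univ.erase i) with hemp | hs
  · have hall : ∀ j : Fin n, j = i := by
      intro j
      by_contra hj
      exact Finset.notMem_empty j (hemp ▸ Finset.mem_erase.2 ⟨hj, Finset.mem_univ j⟩)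
    have hset : {ω | ∀ j : Fin n, V j + ε j ω ≤ V i + ε i ω} = Set.univ := by
      ext ω
      simp only [Set.mem_setOf_eq, Set.mem_univ, iff_true]
      intro j; rw [hall j]
    have hn1 : n = 1 := le_antisymm
      (by simpa using Fintype.card_le_one_iff.2 (fun a b => (hall a).trans (hall b).symm)) hn
    have hsum : ∑ j : Fin n, Real.exp (V j / β) = Real.exp (V i / β) := by
      have h := Finset.sum_congr rfl
        (fun j (_ : j ∈ (Finset.univ : Finset (Fin n))) =>
          by rw [hall j] : ∀ j ∈ (Finset.univ : Finset (Fin n)),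
            Real.exp (V j / β) = Real.exp (V i / β))
      rw [h, Finset.sum_const, Finset.card_univ, Fintype.card_fin, hn1, one_smul]
    rw [hset, hsum, measure_univ, div_self (Real.exp_pos _).ne', ENNReal.ofReal_one]
  · set s : Finset (Fin n) := Finset.univ.erase i with hsdef
    set K : ℝ := ∑ j ∈ s, Real.exp ((V j - V i) / β) with hK
    have hKpos : 0 < K := Finset.sum_pos (fun j _ => Real.exp_pos _) hs
    set S : ℝ := 1 + K with hSdef
    have hSpos : 0 < S := by positivity
    set M : Ω → ℝ := fun ω => s.sup' hs (fun j => V j + ε j ω) with hMdef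
    have hM : Measurable M := by
      have h := Finset.measurable_sup' hs
        (fun j _ => (measurable_const.add (hmeas j) : Measurable (fun ω => V j + ε j ω)))
      have he : (s.sup' hs fun j ω => V j + ε j ω) = M := by
        funext ω; rw [Finset.sup'_apply]
      rw [← he]; exact h
    -- independence of ε i and M
    have hdisj : Disjoint ({i} : Finset (Fin n)) s := by
      simp [hsdef, Finset.disjoint_left]
    have h1 := hindep.indepFun_finset {i} s hdisj hmeas
    have hφ : Measurable
        (fun v : ({i} : Finset (Fin n)) → ℝ => v ⟨i, Finset.mem_singleton_self i⟩) :=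
      measurable_pi_apply _
    have hψm : Measurable
        (fun v : {x // x ∈ s} → ℝ => s.attach.sup' hs.attach (fun j => V j + v j)) := by
      have h := Finset.measurable_sup' (s := s.attach) hs.attach
        (fun j _ => (measurable_const.add (measurable_pi_apply j) :
          Measurable (fun v : {x // x ∈ s} → ℝ => V (j : Fin n) + v j)))
      have he : (s.attach.sup' hs.attach fun j (v : {x // x ∈ s} → ℝ) => V (j : Fin n) + v j)
          = fun v : {x // x ∈ s} → ℝ => s.attach.sup' hs.attach (fun j => V (j : Fin n) + v j) := by
        funext v; rw [Finset.sup'_apply]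
      rw [← he]; exact h
    have hIndep : IndepFun (ε i) M P := by
      have h2 := h1.comp hφ hψm
      convert h2 using 1
      · rfl
      funext ω
      show M ω = s.attach.sup' hs.attach (fun j => V (j : Fin n) + ε (j : Fin n) ω)
      rw [hMdef]
      refine le_antisymm (Finset.sup'_le _ _ fun j hj => ?_)
        (Finset.sup'_le _ _ fun j _ => ?_)
      · exact Finset.le_sup' (f := fun j : {x // x ∈ s} => V (j : Fin n) + ε (j : Fin n) ω)
          (Finset.mem_attach _ ⟨j, hj⟩)
      · exact Finset.le_sup' (f := fun j => V j + ε j ω) j.2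
    -- law of M
    have hMlaw : ∀ t : ℝ, Measure.map M P (Set.Iic t)
        = ENNReal.ofReal (∏ j ∈ s, Real.exp (-Real.exp (-((t - V j - μ₀) / β)))) := by
      intro t
      rw [Measure.map_apply hM measurableSet_Iic]
      have hpre : M ⁻¹' Set.Iic t = ⋂ j ∈ s, ε j ⁻¹' Set.Iic (t - V j) := by
        ext ω
        simp only [Set.mem_preimage, Set.mem_Iic, hMdef, Finset.sup'_le_iff, Set.mem_iInter]
        constructor
        · intro h j hj
          linarith [h j hj]
        · intro h j hj
          linarith [h j hj]
      rw [hpre, hindep.meas_biInter (fun j _ => ⟨Set.Iic (t - V j), measurableSet_Iic, rfl⟩),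
        ENNReal.ofReal_prod_of_nonneg (fun j _ => (Real.exp_pos _).le)]
      refine Finset.prod_congr rfl (fun j _ => ?_)
      rw [← Measure.map_apply (hmeas j) measurableSet_Iic, hdist j, gumbel_cdf hβ]
    -- rewrite event via the pair (ε i, M)
    have hpair : Measurable (fun ω => (ε i ω, M ω)) := (hmeas i).prodMk hM
    have hSset : MeasurableSet {p : ℝ × ℝ | p.2 ≤ V i + p.1} :=
      measurableSet_le measurable_snd (measurable_const.add measurable_fst)
    have hEset : {ω | ∀ j : Fin n, V j + ε j ω ≤ V i + ε i ω}
        = (fun ω => (ε i ω, M ω)) ⁻¹' {p : ℝ × ℝ | p.2 ≤ V i + p.1} := by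
      ext ω
      simp only [Set.mem_setOf_eq, Set.mem_preimage, hMdef, Finset.sup'_le_iff]
      constructor
      · intro h j _; exact h j
      · intro h j
        rcases eq_or_ne j i with rfl | hj
        · exact le_rfl
        · exact h j (Finset.mem_erase.2 ⟨hj, Finset.mem_univ _⟩)
    haveI : IsProbabilityMeasure (Measure.map M P) := Measure.isProbabilityMeasure_map hM.aemeasurable
    rw [hEset, ← Measure.map_apply hpair hSset,
      (indepFun_iff_map_prod_eq_prod_map_map (hmeas i).aemeasurable hM.aemeasurable).1 hIndep,
      Measure.prod_apply hSset]
    have hslice : ∀ x : ℝ, (Prod.mk x ⁻¹' {p : ℝ × ℝ | p.2 ≤ V i + p.1}) = Set.Iic (V i + x) := by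
      intro x; ext y; simp
    simp_rw [hslice, hMlaw, hdist i]
    -- compute the lintegral
    have hf : Measurable (fun x => ENNReal.ofReal (gumbelPdf μ₀ β x)) :=
      ENNReal.measurable_ofReal.comp continuous_gumbelPdf.measurable
    have hg : Measurable (fun x : ℝ =>
        ENNReal.ofReal (∏ j ∈ s, Real.exp (-Real.exp (-((V i + x - V j - μ₀) / β))))) := by
      refine ENNReal.measurable_ofReal.comp (Continuous.measurable ?_)
      exact continuous_finset_prod _ (fun j _ => by fun_prop)
    rw [gumbelMeasure, lintegral_withDensity_eq_lintegral_mul _ hf hg]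
    simp only [Pi.mul_apply]
    have hpoint : ∀ x : ℝ,
        ENNReal.ofReal (gumbelPdf μ₀ β x)
          * ENNReal.ofReal (∏ j ∈ s, Real.exp (-Real.exp (-((V i + x - V j - μ₀) / β))))
        = ENNReal.ofReal (1 / S) * ENNReal.ofReal (gumbelPdf (μ₀ + β * Real.log S) β x) := by
      intro x
      rw [← ENNReal.ofReal_mul (gumbelPdf_nonneg hβ x), ← ENNReal.ofReal_mul (by positivity)]
      congr 1
      have hprod : ∏ j ∈ s, Real.exp (-Real.exp (-((V i + x - V j - μ₀) / β)))
          = Real.exp (-((S - 1) * Real.exp (-((x - μ₀) / β)))) := by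
        rw [← Real.exp_sum]
        congr 1
        have hterm : ∀ j ∈ s, -Real.exp (-((V i + x - V j - μ₀) / β))
            = -(Real.exp ((V j - V i) / β) * Real.exp (-((x - μ₀) / β))) := by
          intro j _
          rw [← Real.exp_add]
          congr 1
          field_simp
          ring
        rw [Finset.sum_congr rfl hterm,
          show S - 1 = K by rw [hSdef]; ring, hK, Finset.sum_mul, ← Finset.sum_neg_distrib]
      rw [hprod, gumbelPdf_key hβ hSpos x]
    rw [lintegral_congr hpoint, lintegral_const_mul' _ _ ENNReal.ofReal_ne_top,
      gumbel_lintegral_one hβ, mul_one]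
    congr 1
    have hsplit : ∑ j : Fin n, Real.exp (V j / β)
        = Real.exp (V i / β) + ∑ j ∈ s, Real.exp (V j / β) := by
      rw [hsdef]
      exact (Finset.add_sum_erase _ _ (Finset.mem_univ i)).symm
    have hmul : Real.exp (V i / β) * S = ∑ j : Fin n, Real.exp (V j / β) := by
      rw [hSdef, hK, mul_add, mul_one, Finset.mul_sum, hsplit]
      congr 1
      refine Finset.sum_congr rfl (fun j _ => ?_)
      rw [← Real.exp_add]
      congr 1
      field_simp
      ring
    rw [← hmul, eq_div_iff (by positivity)]
    field_simp
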